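/- For integers k and n with 2 ≤ k ≤ n−1, α_k(n) ≤ 2^n · e^{−(n−k+1)/(12 · 2^k)}. -/

import Mathlib

/-- All binary words of length `n` (`false` = 0, `true` = 1), listed in lexicographic order. -/
def allWords : ℕ → List (List Bool)
  | 0 => [[]]
  | n + 1 => (allWords n).flatMap (fun w => [w ++ [false], w ++ [true]])

/-- The skew of a binary word: number of 0s minus number of 1s. -/
def skew (w : List Bool) : ℤ := (w.map (fun b => if b then (-1 : ℤ) else 1)).sum

/-- The discrepancy of a binary word: the maximum over all (nonempty) initial
segments of the absolute difference between the number of 0s and of 1s. -/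
def disc (w : List Bool) : ℤ :=
  ((List.range w.length).map (fun M => |skew (w.take (M + 1))|)).foldr max 0

/-- `w` contains a run of `k` consecutive 0s. -/
def hasZeroRun (k : ℕ) (w : List Bool) : Prop := List.replicate k false <:+: w

instance (k : ℕ) : DecidablePred (hasZeroRun k) := fun _ => inferInstanceAs (Decidable (_ <:+: _))

/-- Number of binary words of length `n` containing no run of `k` consecutive 0s. -/
def alpha (k n : ℕ) : ℕ := ((allWords n).filter (fun w => !decide (hasZeroRun k w))).length

/-- Sum of the skews of all binary words of length `n` containing no run of `k` consecutive 0s. -/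
def beta (k n : ℕ) : ℤ :=
  (((allWords n).filter (fun w => !decide (hasZeroRun k w))).map skew).sum

/-- Strict lexicographic order on binary words, with 0 < 1. -/
def lexLt (u v : List Bool) : Prop := List.Lex (· < ·) u v

instance : DecidableRel lexLt := fun _ _ => inferInstanceAs (Decidable (List.Lex _ _ _))

/-- Weak lexicographic order on binary words. -/
def lexLe (u v : List Bool) : Prop := lexLt u v ∨ u = v

instance : DecidableRel lexLe := fun _ _ => inferInstanceAs (Decidable (_ ∨ _))

/-- A binary Lyndon word: nonempty and strictly lexicographically smaller than
each of its nontrivial cyclic rotations. -/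
def IsLyndon (w : List Bool) : Prop :=
  w ≠ [] ∧ ∀ i ∈ Finset.Ico 1 w.length, lexLt w (w.rotate i)

instance : DecidablePred IsLyndon := fun _ => inferInstanceAs (Decidable (_ ∧ _))

/-- `ell n k`: the concatenation, in lexicographic order, of all binary Lyndon words of
length `n` whose longest run of consecutive 0s has length exactly `k`. -/
def ell (n k : ℕ) : List Bool :=
  (List.insertionSort lexLe ((allWords n).filter (fun w =>
    decide (IsLyndon w) && decide (hasZeroRun k w) && !decide (hasZeroRun (k + 1) w)))).flatten

/-- `LWord n`: the lexicographically least binary de Bruijn sequence of order `n`, i.e. the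
concatenation, in lexicographic order, of all binary Lyndon words of length dividing `n`. -/
def LWord (n : ℕ) : List Bool :=
  (List.insertionSort lexLe (((List.range (n + 1)).flatMap allWords).filter
    (fun w => decide (IsLyndon w) && decide (w.length ∣ n)))).flatten

/-- The number of occurrences of `0^k` as a subword of `w`. -/
def occCount (k : ℕ) (w : List Bool) : ℕ :=
  ((List.range (w.length + 1)).filter
    (fun i => decide (List.replicate k false <+: w.drop i))).length


section AuxProof

/-! ### Basic facts about `allWords` -/

lemma aw_length : ∀ {n : ℕ} {w : List Bool}, w ∈ allWords n → w.length = n := by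
  intro n
  induction n with
  | zero => intro w h; simp [allWords] at h; simp [h]
  | succ n ih =>
    intro w h
    simp only [allWords, List.mem_flatMap, List.mem_cons, List.mem_singleton,
      List.not_mem_nil, or_false] at h
    obtain ⟨u, hu, hw⟩ := h
    rcases hw with rfl | rfl <;> simp [ih hu]

lemma mem_allWords : ∀ {n : ℕ} {w : List Bool}, w.length = n → w ∈ allWords n := by
  intro n
  induction n with
  | zero => intro w h; rw [List.length_eq_zero_iff] at h; simp [h, allWords]
  | succ n ih =>
    intro w h
    have hne : w ≠ [] := by intro e; simp [e] at h
    obtain ⟨u, b, rfl⟩ : ∃ u b, w = u ++ [b] :=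
      ⟨w.dropLast, w.getLast hne, (List.dropLast_append_getLast hne).symm⟩
    simp only [List.length_append, List.length_singleton] at h
    have hu : u.length = n := by omega
    simp only [allWords, List.mem_flatMap]
    exact ⟨u, ih hu, by cases b <;> simp⟩

lemma length_flatMap_two (l : List (List Bool)) :
    (l.flatMap (fun w => [w ++ [false], w ++ [true]])).length = 2 * l.length := by
  induction l with
  | nil => simp
  | cons a l ih => simp only [List.flatMap_cons, List.length_append, ih, List.length_cons]; simp; omega

lemma length_allWords (n : ℕ) : (allWords n).length = 2 ^ n := by
  induction n with
  | zero => rfl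
  | succ n ih => rw [allWords, length_flatMap_two, ih, pow_succ]; ring

lemma alpha_le_two_pow (k n : ℕ) : alpha k n ≤ 2 ^ n := by
  rw [alpha]
  exact (List.length_filter_le _ _).trans (le_of_eq (length_allWords n))

/-! ### Zero-run lemmas -/

lemma not_zrun_nil {k : ℕ} (hk : 1 ≤ k) : ¬ hasZeroRun k [] := by
  intro h
  have := h.length_le
  simp at this
  omega

lemma not_zrun_rep {k : ℕ} (hk : 1 ≤ k) : ¬ hasZeroRun k (List.replicate (k - 1) false) := by
  intro h
  have := h.length_le
  simp at this
  omega

lemma zrun_append_left {k : ℕ} {u : List Bool} (v : List Bool) (h : hasZeroRun k u) :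
    hasZeroRun k (u ++ v) := h.trans ⟨[], v, by simp⟩

lemma zrun_append_right {k : ℕ} (u : List Bool) {v : List Bool} (h : hasZeroRun k v) :
    hasZeroRun k (u ++ v) := h.trans ⟨u, [], by simp⟩

lemma rep_prefix_split {v : List Bool} : ∀ (j : ℕ) (u : List Bool),
    List.replicate j false <+: u ++ true :: v → List.replicate j false <+: u := by
  intro j
  induction j with
  | zero => intro u _; simp
  | succ j ih =>
    intro u h
    cases u with
    | nil =>
      rw [List.nil_append, List.replicate_succ, List.cons_prefix_cons] at h
      exact absurd h.1 (by simp)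
    | cons a u' =>
      rw [List.cons_append, List.replicate_succ, List.cons_prefix_cons] at h
      rw [List.replicate_succ, List.cons_prefix_cons]
      exact ⟨h.1, ih u' h.2⟩

lemma zrun_split {k : ℕ} (hk : 1 ≤ k) (v : List Bool) : ∀ u : List Bool,
    hasZeroRun k (u ++ true :: v) ↔ hasZeroRun k u ∨ hasZeroRun k v := by
  have fwd : ∀ u : List Bool, hasZeroRun k (u ++ true :: v) →
      hasZeroRun k u ∨ hasZeroRun k v := by
    intro u
    induction u with
    | nil =>
      intro h
      rw [List.nil_append] at h
      rcases List.infix_cons_iff.mp h with h | h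
      · exfalso
        obtain ⟨k', rfl⟩ : ∃ k', k = k' + 1 := ⟨k - 1, by omega⟩
        rw [List.replicate_succ, List.cons_prefix_cons] at h
        exact absurd h.1 (by simp)
      · exact Or.inr h
    | cons a u' ih =>
      intro h
      rw [List.cons_append] at h
      rcases List.infix_cons_iff.mp h with h | h
      · exact Or.inl (rep_prefix_split k (a :: u') h).isInfix
      · rcases ih h with h | h
        · exact Or.inl (List.infix_cons h)
        · exact Or.inr h
  intro u
  constructor
  · exact fwd u
  · rintro (h | h)
    · exact zrun_append_left _ h
    · exact zrun_append_right u (h.trans ⟨[true], [], by simp⟩)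

lemma zrun_true {k : ℕ} (hk : 1 ≤ k) (w : List Bool) :
    hasZeroRun k (w ++ [true]) ↔ hasZeroRun k w := by
  rw [show ([true] : List Bool) = true :: [] from rfl, zrun_split hk [] w]
  simp [not_zrun_nil hk]

lemma zrun_false {k : ℕ} (hk : 1 ≤ k) (w : List Bool) :
    hasZeroRun k (w ++ [false]) ↔
      hasZeroRun k w ∨ List.replicate (k - 1) false <:+ w := by
  constructor
  · intro h
    have h' : List.replicate k false <:+: (false :: w.reverse) := by
      have := h.reverse
      simpa using this
    rcases List.infix_cons_iff.mp h' with h'' | h''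
    · right
      obtain ⟨k', rfl⟩ : ∃ k', k = k' + 1 := ⟨k - 1, by omega⟩
      rw [List.replicate_succ, List.cons_prefix_cons] at h''
      have := h''.2.reverse
      simpa using this
    · left
      have := h''.reverse
      simpa [hasZeroRun] using this
  · rintro (h | h)
    · exact zrun_append_left _ h
    · have h2 : List.replicate (k - 1) false ++ [false] <:+ w ++ [false] := by
        obtain ⟨t, ht⟩ := h
        exact ⟨t, by rw [← List.append_assoc, ht]⟩
      have h3 : List.replicate (k - 1) false ++ [false] = List.replicate k false := by
        rw [← List.replicate_succ']
        congr 1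
        omega
      rw [h3] at h2
      exact h2.isInfix

/-! ### The recurrence -/

/-- Number of words of length `n` avoiding `0^k` and ending with `0^(k-1)`. -/
def deltaCount (k n : ℕ) : ℕ :=
  (allWords n).countP
    (fun w => !decide (hasZeroRun k w) && decide (List.replicate (k - 1) false <:+ w))

lemma alpha_countP (k n : ℕ) :
    alpha k n = (allWords n).countP (fun w => !decide (hasZeroRun k w)) :=
  List.countP_eq_length_filter.symm

lemma two_mul_countP (l : List (List Bool)) (p s : List Bool → Bool)
    (hf : ∀ w, p (w ++ [false]) = (p w && !s w))
    (ht : ∀ w, p (w ++ [true]) = p w) :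
    (l.flatMap (fun w => [w ++ [false], w ++ [true]])).countP p
      + l.countP (fun w => p w && s w) = 2 * l.countP p := by
  induction l with
  | nil => simp
  | cons a l ih =>
    simp only [List.flatMap_cons, List.countP_append, List.countP_cons, List.countP_nil, hf, ht]
    cases hp : p a <;> cases hs : s a <;> simp [hp, hs] <;> omega

lemma alpha_succ {k : ℕ} (hk : 1 ≤ k) (n : ℕ) :
    alpha k (n + 1) + deltaCount k n = 2 * alpha k n := by
  rw [alpha_countP, alpha_countP, deltaCount, allWords]
  apply two_mul_countP
  · intro w
    have hd : decide (hasZeroRun k (w ++ [false]))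
        = (decide (hasZeroRun k w) || decide (List.replicate (k - 1) false <:+ w)) := by
      rw [Bool.eq_iff_iff]
      simp [zrun_false hk w]
    rw [hd, Bool.not_or]
  · intro w
    have hd : decide (hasZeroRun k (w ++ [true])) = decide (hasZeroRun k w) := by
      rw [Bool.eq_iff_iff]
      simp [zrun_true hk w]
    rw [hd]

lemma alpha_succ_le {k : ℕ} (hk : 1 ≤ k) (n : ℕ) : alpha k (n + 1) ≤ 2 * alpha k n := by
  have := alpha_succ hk n
  omega

lemma alpha_shift {k : ℕ} (hk : 1 ≤ k) (m : ℕ) : ∀ i : ℕ, alpha k (m + i) ≤ 2 ^ i * alpha k m := by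
  intro i
  induction i with
  | zero => simp
  | succ i ih =>
    calc alpha k (m + (i + 1)) = alpha k ((m + i) + 1) := by ring_nf
    _ ≤ 2 * alpha k (m + i) := alpha_succ_le hk _
    _ ≤ 2 * (2 ^ i * alpha k m) := by omega
    _ = 2 ^ (i + 1) * alpha k m := by ring

/-! ### Lower bound for `deltaCount` -/

lemma allWords_add (m : ℕ) : ∀ j : ℕ,
    allWords (m + j) = (allWords m).flatMap (fun u => (allWords j).map (u ++ ·)) := by
  intro j
  induction j with
  | zero => simp [allWords]
  | succ j ih =>
    rw [show m + (j + 1) = (m + j) + 1 from rfl, allWords, ih, List.flatMap_assoc]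
    congr 1
    funext u
    rw [show allWords (j + 1)
        = (allWords j).flatMap (fun w => [w ++ [false], w ++ [true]]) from rfl,
      List.map_flatMap, List.flatMap_map]
    congr 1
    funext v
    simp [List.append_assoc]

lemma sum_map_ite (l : List (List Bool)) (q : List Bool → Bool) :
    (l.map (fun a => if q a then 1 else 0)).sum = l.countP q := by
  induction l with
  | nil => simp
  | cons a l ih => by_cases h : q a <;> simp [List.countP_cons, h, ih] <;> omega

lemma countP_flatMap'' (p : List Bool → Bool) (l : List (List Bool))
    (f : List Bool → List (List Bool)) :
    List.countP p (l.flatMap f) = (l.map (fun a => List.countP p (f a))).sum := by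
  induction l with
  | nil => simp
  | cons a l ih => simp [List.flatMap_cons, List.countP_append, ih]

lemma deltaCount_ge {k : ℕ} (hk : 1 ≤ k) (m : ℕ) : alpha k m ≤ deltaCount k (m + k) := by
  rw [deltaCount, allWords_add m k, countP_flatMap'', alpha_countP, ← sum_map_ite]
  apply List.sum_le_sum
  intro u _
  by_cases hp : hasZeroRun k u
  · simp [hp]
  · have hp' : (!decide (hasZeroRun k u)) = true := by simp [hp]
    rw [hp', if_pos rfl]
    rw [List.countP_map]
    apply Nat.one_le_iff_ne_zero.mpr
    apply Nat.pos_iff_ne_zero.mp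
    rw [List.countP_pos_iff]
    refine ⟨true :: List.replicate (k - 1) false, mem_allWords (by simp; omega), ?_⟩
    have h1 : ¬ hasZeroRun k (u ++ true :: List.replicate (k - 1) false) := by
      rw [zrun_split hk _ u]
      rintro (h | h)
      · exact hp h
      · exact not_zrun_rep hk h
    have h2 : List.replicate (k - 1) false <:+ u ++ true :: List.replicate (k - 1) false :=
      (List.suffix_cons true _).trans (List.suffix_append u _)
    simp [Function.comp, h1, h2]

/-! ### The real-valued induction -/

lemma alpha_bound_aux {k : ℕ} (hk : 1 ≤ k) : ∀ j : ℕ,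
    (alpha k (k + j) : ℝ) ≤ 2 ^ (k + j) * (1 - ((2 : ℝ) ^ (k + 1))⁻¹) ^ j := by
  intro j
  induction j with
  | zero =>
    simpa using (by exact_mod_cast alpha_le_two_pow k k : (alpha k (k + 0) : ℝ) ≤ 2 ^ k)
  | succ j ih =>
    have h2k : (0 : ℝ) < 2 ^ k := by positivity
    have hrec := alpha_succ hk (k + j)
    have hdge : alpha k j ≤ deltaCount k (k + j) := by
      have := deltaCount_ge hk j
      rwa [Nat.add_comm j k] at this
    have hsh : alpha k (k + j) ≤ 2 ^ k * alpha k j := by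
      have := alpha_shift hk j k
      rwa [Nat.add_comm j k] at this
    have e1 : (alpha k (k + (j + 1)) : ℝ) = 2 * alpha k (k + j) - deltaCount k (k + j) := by
      have h := hrec
      have : ((alpha k (k + j + 1) : ℕ) : ℝ) + deltaCount k (k + j) = 2 * alpha k (k + j) := by
        exact_mod_cast congrArg (Nat.cast : ℕ → ℝ) h
      rw [show k + (j + 1) = k + j + 1 from rfl]
      linarith
    have e2 : (alpha k j : ℝ) ≤ deltaCount k (k + j) := by exact_mod_cast hdge
    have e3 : (alpha k (k + j) : ℝ) ≤ 2 ^ k * alpha k j := by exact_mod_cast hsh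
    have hinv : ((2 : ℝ) ^ k)⁻¹ * 2 ^ k = 1 := inv_mul_cancel₀ (ne_of_gt h2k)
    have hinvnn : (0 : ℝ) ≤ ((2 : ℝ) ^ k)⁻¹ := by positivity
    have key : (alpha k (k + (j + 1)) : ℝ) ≤ (alpha k (k + j) : ℝ) * (2 - ((2 : ℝ) ^ k)⁻¹) := by
      rw [e1]
      have hq : (alpha k (k + j) : ℝ) * ((2 : ℝ) ^ k)⁻¹ ≤ alpha k j := by
        have := mul_le_mul_of_nonneg_right e3 hinvnn
        calc (alpha k (k + j) : ℝ) * ((2 : ℝ) ^ k)⁻¹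
            ≤ 2 ^ k * (alpha k j) * ((2 : ℝ) ^ k)⁻¹ := this
          _ = (alpha k j) * (((2 : ℝ) ^ k)⁻¹ * 2 ^ k) := by ring
          _ = alpha k j := by rw [hinv, mul_one]
      nlinarith [e2, hq]
    have factor : (2 : ℝ) - ((2 : ℝ) ^ k)⁻¹ = 2 * (1 - ((2 : ℝ) ^ (k + 1))⁻¹) := by
      rw [pow_succ]
      field_simp
    have hfnn : (0 : ℝ) ≤ 2 - ((2 : ℝ) ^ k)⁻¹ := by
      have h1 : ((2 : ℝ) ^ k)⁻¹ ≤ 1 := by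
        rw [inv_le_one_iff₀]
        right
        exact one_le_pow₀ (by norm_num)
      linarith
    calc (alpha k (k + (j + 1)) : ℝ)
        ≤ (alpha k (k + j) : ℝ) * (2 - ((2 : ℝ) ^ k)⁻¹) := key
      _ ≤ (2 ^ (k + j) * (1 - ((2 : ℝ) ^ (k + 1))⁻¹) ^ j) * (2 - ((2 : ℝ) ^ k)⁻¹) :=
          mul_le_mul_of_nonneg_right ih hfnn
      _ = 2 ^ (k + (j + 1)) * (1 - ((2 : ℝ) ^ (k + 1))⁻¹) ^ (j + 1) := by
          rw [factor, pow_succ, pow_succ]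
          ring

end AuxProof

/-- For `2 ≤ k ≤ n − 1`, `α_k(n) ≤ 2^n · e^{−(n−k+1)/(12·2^k)}`. -/
theorem alpha_upper (k n : ℕ) (hk : 2 ≤ k) (hkn : k + 1 ≤ n) :
    (alpha k n : ℝ) ≤ 2 ^ n * Real.exp (-(((n : ℝ) - k + 1) / (12 * 2 ^ k))) := by
  obtain ⟨j, rfl⟩ : ∃ j, n = k + j := ⟨n - k, by omega⟩
  have hj : 1 ≤ j := by omega
  have hk1 : (1 : ℕ) ≤ k := by omega
  have h1 := alpha_bound_aux hk1 j
  set ε : ℝ := ((2 : ℝ) ^ (k + 1))⁻¹ with hε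
  have hε0 : (0 : ℝ) ≤ ε := by positivity
  have hε1 : ε ≤ 1 := by
    rw [hε, inv_le_one_iff₀]
    right
    exact one_le_pow₀ (by norm_num)
  have step1 : (1 - ε) ^ j ≤ Real.exp (-ε) ^ j := by
    apply pow_le_pow_left₀ (by linarith)
    have := Real.add_one_le_exp (-ε)
    linarith
  have step2 : Real.exp (-ε) ^ j = Real.exp ((j : ℝ) * (-ε)) := by
    rw [← Real.exp_nat_mul]
  have hcast : ((k + j : ℕ) : ℝ) - (k : ℝ) + 1 = (j : ℝ) + 1 := by push_cast; ring
  have h2k : (0 : ℝ) < 2 ^ k := by positivity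
  have step3 : (j : ℝ) * (-ε) ≤ -(((k + j : ℕ) : ℝ) - k + 1) / (12 * 2 ^ k) := by
    rw [hcast, hε, pow_succ]
    have hj1 : (1 : ℝ) ≤ (j : ℝ) := by exact_mod_cast hj
    rw [neg_div, mul_neg, neg_le_neg_iff, div_le_iff₀ (by positivity)]
    have expand : (j : ℝ) * ((2 : ℝ) ^ k * 2)⁻¹ * (12 * 2 ^ k) = 6 * j := by
      field_simp
      ring
    rw [expand]
    linarith
  have step3' : Real.exp ((j : ℝ) * (-ε)) ≤
      Real.exp (-(((k + j : ℕ) : ℝ) - k + 1) / (12 * 2 ^ k)) := Real.exp_le_exp.mpr step3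
  have hpow : (0 : ℝ) ≤ 2 ^ (k + j) := by positivity
  calc (alpha k (k + j) : ℝ) ≤ 2 ^ (k + j) * (1 - ε) ^ j := h1
    _ ≤ 2 ^ (k + j) * Real.exp (-(((k + j : ℕ) : ℝ) - k + 1) / (12 * 2 ^ k)) := by
        apply mul_le_mul_of_nonneg_left _ hpow
        calc (1 - ε) ^ j ≤ Real.exp (-ε) ^ j := step1
          _ = Real.exp ((j : ℝ) * (-ε)) := step2
          _ ≤ _ := step3'
    _ = 2 ^ (k + j) * Real.exp (-((((k + j : ℕ) : ℝ) - k + 1) / (12 * 2 ^ k))) := by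
        rw [neg_div]
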